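/- For every a ∈ [12/7, 2] and every x ∈ [−1, −3/4], one has 0 ≤ 3(x + 1) ≤ f_a(x) + 1; that is, near the left endpoint −1 (which is fixed when a = 2), one application of f_a increases the distance to −1 by at least a factor 3 as long as the point stays in [−1, −3/4]. -/
import Mathlib

noncomputable section

/-- The quadratic family `f_a(x) = 1 - a x²`. -/
def f (a x : ℝ) : ℝ := 1 - a * x ^ 2

/-- Near the fixed endpoint `-1`, one application of `f_a` (for `a` close to `2`)
expands the distance to `-1` by at least a factor `3`, as long as the point stays
in `[-1, -3/4]`. -/
theorem stmt_15 :
    ∀ a ∈ Set.Icc (12 / 7 : ℝ) 2, ∀ x ∈ Set.Icc (-1 : ℝ) (-3 / 4),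
      0 ≤ 3 * (x + 1) ∧ 3 * (x + 1) ≤ f a x + 1 := by
  rintro a ⟨ha1, ha2⟩ x ⟨hx1, hx2⟩
  constructor
  · linarith
  · simp only [f]
    nlinarith [sq_nonneg (x+1), sq_nonneg x, mul_nonneg (sub_nonneg.2 ha2) (sq_nonneg x)]
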